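/- Let M = A·W' where A is a nonnegative n×r real matrix with s = rank(A) ≥ 1 and W' is a nonnegative r×m real matrix. List the elements of C(A) in increasing lexicographic order as V_1 ≺ V_2 ≺ … ≺ V_k. Suppose σ : {1,…,m} → {1,…,k} is a function such that for every i: the support of the column W'_i is contained in V_{σ(i)}, and V_{σ(i)} is the lexicographically least element of C(A) with M_i ∈ cone(A_{V_{σ(i)}}). For each j ∈ {1,…,k} define Q_j = { i ∈ {1,…,m} : (A_{V_j}ᵀ·A_{V_j})⁻¹·A_{V_j}ᵀ·M_i is entrywise nonnegative } and P_j = Q_j \ (Q_1 ∪ … ∪ Q_{j−1}). Then for all i ∈ {1,…,m} and j ∈ {1,…,k}: σ(i) = j if and only if i ∈ P_j. -/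

import Mathlib

open Matrix

/-- `U` indexes a maximal linearly independent set of columns of `A`
(an element of `C(A)`). -/
def MaximalIndepCols {n r : ℕ} (A : Matrix (Fin n) (Fin r) ℝ) (U : Finset (Fin r)) : Prop :=
  LinearIndependent ℝ (fun j : U => (fun i => A i j : Fin n → ℝ)) ∧
    ∀ V : Finset (Fin r), U ⊆ V →
      LinearIndependent ℝ (fun j : V => (fun i => A i j : Fin n → ℝ)) → V = U

/-- `cone(A_U)`: nonnegative combinations of the columns of `A` indexed by `U`. -/
def Cone {n r : ℕ} (A : Matrix (Fin n) (Fin r) ℝ) (U : Finset (Fin r)) : Set (Fin n → ℝ) :=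
  {x | ∃ c : Fin r → ℝ, (∀ i, 0 ≤ c i) ∧ (∀ i ∉ U, c i = 0) ∧ x = A.mulVec c}

/-- The `n × |U|` submatrix of `A` consisting of the columns indexed by `U`. -/
def ColSub {n r : ℕ} (A : Matrix (Fin n) (Fin r) ℝ) (U : Finset (Fin r)) :
    Matrix (Fin n) U ℝ := Matrix.of fun i j => A i j

/-- Strict lexicographic order on finite sets (comparing the increasing enumerations in
dictionary order). -/
def FinsetLexLT {r : ℕ} (U V : Finset (Fin r)) : Prop :=
  List.Lex (· < ·) (U.sort (· ≤ ·)) (V.sort (· ≤ ·))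

/-- `U ⪯ V` in the lexicographic order on finite sets. -/
def FinsetLexLE {r : ℕ} (U V : Finset (Fin r)) : Prop :=
  U = V ∨ FinsetLexLT U V

/-- `U` is the lexicographically least element of `C(A)` with `x ∈ cone(A_U)`. -/
def IsLexLeastBasis {n r : ℕ} (A : Matrix (Fin n) (Fin r) ℝ) (U : Finset (Fin r))
    (x : Fin n → ℝ) : Prop :=
  MaximalIndepCols A U ∧ x ∈ Cone A U ∧
    ∀ V : Finset (Fin r), MaximalIndepCols A V → x ∈ Cone A V → FinsetLexLE U V

/-- The pseudoinverse of the column submatrix `A_U` applied to `x`,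
i.e. `(A_Uᵀ A_U)⁻¹ A_Uᵀ x`. -/
noncomputable def pinvApply {n r : ℕ} (A : Matrix (Fin n) (Fin r) ℝ) (U : Finset (Fin r))
    (x : Fin n → ℝ) : U → ℝ :=
  (((ColSub A U)ᵀ * ColSub A U)⁻¹ * (ColSub A U)ᵀ).mulVec x

lemma gram_isUnit {n : ℕ} {ι : Type*} [Fintype ι] [DecidableEq ι]
    (B : Matrix (Fin n) ι ℝ)
    (h : LinearIndependent ℝ (fun j : ι => (fun i => B i j : Fin n → ℝ))) :
    IsUnit (Bᵀ * B).det := by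
  rw [isUnit_iff_ne_zero]
  intro hdet
  obtain ⟨v, hv, hmv⟩ := (Matrix.exists_mulVec_eq_zero_iff).mpr hdet
  have h1 : B.mulVec v = 0 := by
    have h2 := congrArg (fun w => dotProduct v w) hmv
    simp only [← Matrix.mulVec_mulVec] at h2
    rw [ dotProduct_mulVec, Matrix.vecMul_transpose,
      dotProduct_zero] at h2
    exact dotProduct_self_eq_zero.mp h2
  apply hv
  have hz : ∑ j, v j • (fun i => B i j : Fin n → ℝ) = 0 := by
    funext l
    rw [Finset.sum_apply]
    have := congrFun h1 l
    simpa [Matrix.mulVec, dotProduct, mul_comm] using this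
  have := Fintype.linearIndependent_iff.mp h v hz
  funext j; exact this j

lemma pinv_mulVec {n r : ℕ} (A : Matrix (Fin n) (Fin r) ℝ) (U : Finset (Fin r))
    (h : LinearIndependent ℝ (fun j : U => (fun i => A i j : Fin n → ℝ)))
    (c : U → ℝ) :
    pinvApply A U ((ColSub A U).mulVec c) = c := by
  have hg : IsUnit ((ColSub A U)ᵀ * ColSub A U).det := gram_isUnit _ h
  unfold pinvApply
  rw [Matrix.mulVec_mulVec, Matrix.mul_assoc, Matrix.nonsing_inv_mul _ hg, Matrix.one_mulVec]

lemma colSub_mulVec {n r : ℕ} (A : Matrix (Fin n) (Fin r) ℝ) (U : Finset (Fin r))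
    (c : Fin r → ℝ) (hc : ∀ t ∉ U, c t = 0) :
    A.mulVec c = (ColSub A U).mulVec (fun j => c j) := by
  funext i
  simp only [Matrix.mulVec, dotProduct, ColSub, Matrix.of_apply]
  rw [Finset.sum_coe_sort U (fun t => A i t * c t)]
  refine (Finset.sum_subset (Finset.subset_univ U) ?_).symm
  intro t _ htU
  simp [hc t htU]

lemma pinv_key {n r : ℕ} {A : Matrix (Fin n) (Fin r) ℝ} {U : Finset (Fin r)}
    (h : LinearIndependent ℝ (fun j : U => (fun i => A i j : Fin n → ℝ)))
    (c : Fin r → ℝ) (hc : ∀ t ∉ U, c t = 0) :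
    pinvApply A U (A.mulVec c) = fun j : U => c j := by
  rw [colSub_mulVec A U c hc, pinv_mulVec A U h]

set_option maxHeartbeats 2000000 in
lemma col_mem_span {n r : ℕ} {A : Matrix (Fin n) (Fin r) ℝ} {U : Finset (Fin r)}
    (hU : MaximalIndepCols A U) (t : Fin r) :
    (fun i => A i t) ∈
      Submodule.span ℝ ((fun s => (fun i => A i s : Fin n → ℝ)) '' ↑U) := by
  by_contra hnot
  have ht : t ∉ (↑U : Set (Fin r)) := fun h =>
    hnot (Submodule.subset_span (Set.mem_image_of_mem _ h))
  have hU1 : LinearIndependent ℝ (fun x : (↑U : Set (Fin r)) =>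
      (fun i => A i x : Fin n → ℝ)) :=
    (linearIndependent_equiv'
      (⟨fun x => ⟨x.1, x.2⟩, fun x => ⟨x.1, x.2⟩, fun _ => rfl, fun _ => rfl⟩ :
        ↥U ≃ ↥(↑U : Set (Fin r)))
      (f := fun x : (↑U : Set (Fin r)) => (fun i => A i x : Fin n → ℝ))
      (g := fun j : U => (fun i => A i j : Fin n → ℝ)) (funext fun x => rfl)).mp hU.1
  have hli : LinearIndependent ℝ (fun x : ↥(insert t (↑U : Set (Fin r))) =>
      (fun i => A i x : Fin n → ℝ)) :=
    (linearIndepOn_insert (f := fun s => (fun i => A i s : Fin n → ℝ)) ht).mpr ⟨hU1, hnot⟩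
  have hli2 : LinearIndependent ℝ (fun x : (insert t U : Finset (Fin r)) =>
      (fun i => A i x : Fin n → ℝ)) :=
    (linearIndependent_equiv'
      (⟨fun x => ⟨x.1, Set.mem_insert_iff.mpr (Finset.mem_insert.mp x.2)⟩,
        fun x => ⟨x.1, Finset.mem_insert.mpr (Set.mem_insert_iff.mp x.2)⟩,
        fun _ => rfl, fun _ => rfl⟩ :
        ↥(insert t U : Finset (Fin r)) ≃ ↥(insert t (↑U : Set (Fin r))))
      (f := fun x : ↥(insert t (↑U : Set (Fin r))) => (fun i => A i x : Fin n → ℝ))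
      (g := fun x : (insert t U : Finset (Fin r)) => (fun i => A i x : Fin n → ℝ))
      (funext fun x => rfl)).mpr hli
  have heq := hU.2 (insert t U) (Finset.subset_insert t U) hli2
  exact ht (by rw [← heq]; exact Finset.mem_insert_self t U)

lemma exists_coeff {n r : ℕ} {A : Matrix (Fin n) (Fin r) ℝ} {U : Finset (Fin r)}
    (hU : MaximalIndepCols A U) (w : Fin r → ℝ) :
    ∃ c : Fin r → ℝ, (∀ t ∉ U, c t = 0) ∧ A.mulVec w = A.mulVec c := by
  classical
  have hmem : A.mulVec w ∈
      Submodule.span ℝ ((fun s => (fun i => A i s : Fin n → ℝ)) '' ↑U) := by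
    have hsum : A.mulVec w = ∑ t, w t • (fun i => A i t : Fin n → ℝ) := by
      funext l
      rw [Finset.sum_apply]
      simp [Matrix.mulVec, dotProduct, mul_comm]
    rw [hsum]
    exact Submodule.sum_mem _ fun t _ => Submodule.smul_mem _ _ (col_mem_span hU t)
  rw [Set.image_eq_range] at hmem
  obtain ⟨d, hd⟩ := Submodule.mem_span_range_iff_exists_fun ℝ |>.mp hmem
  refine ⟨fun t => if h : t ∈ U then d ⟨t, h⟩ else 0, fun t ht => dif_neg ht, ?_⟩
  rw [colSub_mulVec A U _ (fun t ht => dif_neg ht), ← hd]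
  funext l
  rw [Finset.sum_apply]
  simp [Matrix.mulVec, dotProduct, ColSub, mul_comm]

lemma lex_not_both {r : ℕ} {U V : Finset (Fin r)} (h1 : FinsetLexLE U V)
    (h2 : FinsetLexLT V U) : False := by
  simp only [FinsetLexLE, FinsetLexLT] at h1 h2
  rcases h1 with rfl | h1
  · exact List.Lex.asymm (· < ·) |>.asymm _ _ h2 h2
  · exact List.Lex.asymm (· < ·) |>.asymm _ _ h1 h2

lemma cone_of_pinv_nonneg {n r : ℕ} {A : Matrix (Fin n) (Fin r) ℝ} {U : Finset (Fin r)}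
    (hU : MaximalIndepCols A U) (w : Fin r → ℝ)
    (hpos : ∀ t, 0 ≤ pinvApply A U (A.mulVec w) t) : A.mulVec w ∈ Cone A U := by
  obtain ⟨c, hc0, hcw⟩ := exists_coeff hU w
  refine ⟨c, ?_, hc0, hcw⟩
  intro t
  by_cases ht : t ∈ U
  · have h := hpos ⟨t, ht⟩
    rw [hcw, pinv_key hU.1 c hc0] at h
    exact h
  · rw [hc0 t ht]

/-- The choice function of a proper chain is realized by the simplicial
partition built from the sets `Q_j` and `P_j`: with `C(A)` listed in increasing
lexicographic order as `V 1 ≺ ⋯ ≺ V k`, we have `σ i = j` iff `M_i ∈ P_j`. -/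
theorem stmt6 {n m r k : ℕ}
    (A : Matrix (Fin n) (Fin r) ℝ) (W' : Matrix (Fin r) (Fin m) ℝ)
    (hA : ∀ i j, 0 ≤ A i j) (hW' : ∀ i j, 0 ≤ W' i j)
    (hrank : 1 ≤ A.rank)
    (M : Matrix (Fin n) (Fin m) ℝ) (hM : M = A * W')
    (V : Fin k → Finset (Fin r))
    (hVmem : ∀ j, MaximalIndepCols A (V j))
    (hVall : ∀ U : Finset (Fin r), MaximalIndepCols A U → ∃ j, U = V j)
    (hVmono : ∀ j j' : Fin k, j < j' → FinsetLexLT (V j) (V j'))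
    (σ : Fin m → Fin k)
    (hσsupp : ∀ i : Fin m, ∀ t : Fin r, W' t i ≠ 0 → t ∈ V (σ i))
    (hσleast : ∀ i : Fin m, IsLexLeastBasis A (V (σ i)) (fun l => M l i)) :
    ∀ (i : Fin m) (j : Fin k),
      σ i = j ↔
        ((∀ t, 0 ≤ pinvApply A (V j) (fun l => M l i) t) ∧
          ∀ j' : Fin k, j' < j → ¬ (∀ t, 0 ≤ pinvApply A (V j') (fun l => M l i) t)) := by
  intro i j
  have hx : (fun l => M l i) = A.mulVec (fun t => W' t i) := by
    funext l
    simp [hM, Matrix.mul_apply, Matrix.mulVec, dotProduct]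
  -- fact 1 : pinv at V (σ i) is nonnegative
  have hsupp : ∀ t ∉ V (σ i), (fun t => W' t i) t = 0 := by
    intro t ht
    by_contra h
    exact ht (hσsupp i t h)
  have fact1 : ∀ t, 0 ≤ pinvApply A (V (σ i)) (fun l => M l i) t := by
    intro t
    rw [hx, pinv_key (hVmem (σ i)).1 _ hsupp]
    exact hW' t i
  -- fact 2 : nonneg pinv at V j' implies cone membership
  have fact2 : ∀ j' : Fin k, (∀ t, 0 ≤ pinvApply A (V j') (fun l => M l i) t) →
      (fun l => M l i) ∈ Cone A (V j') := by
    intro j' hpos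
    rw [hx] at hpos ⊢
    exact cone_of_pinv_nonneg (hVmem j') _ hpos
  constructor
  · rintro rfl
    refine ⟨fact1, ?_⟩
    intro j' hlt hpos
    have hc := fact2 j' hpos
    have hle := (hσleast i).2.2 (V j') (hVmem j') hc
    exact lex_not_both hle (hVmono j' (σ i) hlt)
  · rintro ⟨hpos, hmin⟩
    rcases lt_trichotomy (σ i) j with h | h | h
    · exact absurd fact1 (hmin (σ i) h)
    · exact h
    · exfalso
      have hc := fact2 j hpos
      have hle := (hσleast i).2.2 (V j) (hVmem j) hc
      exact lex_not_both hle (hVmono j (σ i) h)
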